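/- Let G be a finite connected weighted graph with positive edge weights and total weight W. For any two distinct vertices s, t, the commute time satisfies H_{s,t} + H_{t,s} = 2W·R_{s,t}, where R_{s,t} is the effective resistance between s and t. -/

import Mathlib

noncomputable section

variable {V : Type*} [Fintype V] [DecidableEq V]

/-- A flow from `σ` to `M`: antisymmetric, supported on edges, with net outflow
`σ u` at every unmarked vertex. -/
def IsFlow (wt : V → V → ℝ) (σ : V → ℝ) (M : Set V) (p : V → V → ℝ) : Prop :=
  (∀ u v, p v u = -p u v) ∧ (∀ u v, p u v ≠ 0 → 0 < wt u v) ∧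
    (∀ u ∉ M, ∑ v, p u v = σ u)

/-- The energy `Σ_e p_e²/w_e` of a flow (each undirected edge counted once). -/
def flowEnergy (wt p : V → V → ℝ) : ℝ :=
  (1 / 2) * ∑ u, ∑ v, (p u v) ^ 2 / wt u v

/-- The effective resistance between `s` and `t`: the infimum of energies of
unit flows from `s` to `t`. -/
def effResPt (wt : V → V → ℝ) (s t : V) : ℝ :=
  sInf {x | ∃ p, IsFlow wt (fun u => if u = s then 1 else 0) {t} p ∧ x = flowEnergy wt p}

private lemma sum_antisym_zero (r : V → V → ℝ) (h : ∀ u v, r v u = -r u v) :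
    ∑ u, ∑ v, r u v = 0 := by
  have h1 : ∑ u, ∑ v, r u v = ∑ u, ∑ v, r v u := Finset.sum_comm
  have h2 : (∑ u, ∑ v, r u v) + (∑ u, ∑ v, r v u) = 0 := by
    rw [← Finset.sum_add_distrib]
    refine Finset.sum_eq_zero fun u _ => ?_
    rw [← Finset.sum_add_distrib]
    refine Finset.sum_eq_zero fun v _ => ?_
    rw [h u v]; ring
  linarith

private lemma cross_sum (s t : V) (hst : s ≠ t) (g : V → ℝ) (r : V → V → ℝ)
    (hanti : ∀ u v, r v u = -r u v)
    (hrow : ∀ u, ∑ v, r u v = if u = s then 1 else if u = t then (-1 : ℝ) else 0) :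
    ∑ u, ∑ v, (g u - g v) * r u v = 2 * (g s - g t) := by
  have e1 : ∑ u, ∑ v, (g u - g v) * r u v
      = (∑ u, g u * ∑ v, r u v) - ∑ u, ∑ v, g v * r u v := by
    simp_rw [sub_mul, Finset.sum_sub_distrib, Finset.mul_sum]
  have e2 : ∑ u, ∑ v, g v * r u v = - ∑ u, g u * ∑ v, r u v := by
    calc ∑ u, ∑ v, g v * r u v = ∑ v, ∑ u, g v * r u v := Finset.sum_comm
      _ = ∑ v, -(g v * ∑ u, r v u) := by
          refine Finset.sum_congr rfl fun v _ => ?_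
          rw [← Finset.mul_sum]
          have hs : ∑ u, r u v = -∑ u, r v u := by
            rw [← Finset.sum_neg_distrib]
            exact Finset.sum_congr rfl fun u _ => hanti v u
          rw [hs]; ring
      _ = - ∑ u, g u * ∑ v, r u v := Finset.sum_neg_distrib _
  have e3 : ∑ u, g u * ∑ v, r u v = g s - g t := by
    have hpt : ∀ u : V, g u * (if u = s then (1:ℝ) else if u = t then -1 else 0)
        = (if u = s then g s else 0) + (if u = t then -g t else 0) := by
      intro u
      by_cases h1 : u = s
      · subst h1; rw [if_pos rfl, if_pos rfl, if_neg hst]; ring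
      · rw [if_neg h1, if_neg h1]
        by_cases h2 : u = t
        · subst h2; rw [if_pos rfl, if_pos rfl]; ring
        · rw [if_neg h2, if_neg h2]; ring
    simp_rw [hrow, hpt]
    rw [Finset.sum_add_distrib, Finset.sum_ite_eq' Finset.univ s (fun _ => g s),
      Finset.sum_ite_eq' Finset.univ t (fun u => -g t),
      if_pos (Finset.mem_univ s), if_pos (Finset.mem_univ t)]
    ring
  rw [e1, e2, e3]
  ring

/-- Commute-time identity: for a finite connected weighted graph with total
weight `W` and distinct vertices `s`, `t`, one has `H_{s,t} + H_{t,s} = 2W·R_{s,t}`.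
Hitting times to `t` (resp. to `s`) are characterized by their standard
recurrences. -/
theorem commute_time_identity
    [Nonempty V]
    (wt : V → V → ℝ)
    (hsymm : ∀ u v, wt u v = wt v u) (hnonneg : ∀ u v, 0 ≤ wt u v)
    (hloop : ∀ u, wt u u = 0)
    (hconn : ∀ u v, Relation.ReflTransGen (fun a b => 0 < wt a b) u v)
    (W : ℝ) (hW : W = (1 / 2) * ∑ u, ∑ v, wt u v) (hWpos : 0 < W)
    (s t : V) (hst : s ≠ t)
    (Hst Hts : V → ℝ)
    (hHstt : Hst t = 0)
    (hHstrec : ∀ u, u ≠ t → Hst u = 1 + ∑ v, (wt u v / ∑ z, wt u z) * Hst v)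
    (hHtss : Hts s = 0)
    (hHtsrec : ∀ u, u ≠ s → Hts u = 1 + ∑ v, (wt u v / ∑ z, wt u z) * Hts v) :
    Hst s + Hts t = 2 * W * effResPt wt s t := by
  classical
  have hWne : (2 * W) ≠ 0 := by positivity
  -- degrees are positive
  have hd : ∀ u : V, 0 < ∑ z, wt u z := by
    intro u
    obtain ⟨x, hx⟩ : ∃ x : V, u ≠ x := by
      by_cases h : u = s
      · exact ⟨t, h ▸ hst⟩
      · exact ⟨s, h⟩
    rcases (Relation.ReflTransGen.cases_head (hconn u x)) with h | ⟨c, hc, -⟩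
    · exact absurd h hx
    · calc (0:ℝ) < wt u c := hc
        _ ≤ ∑ z, wt u z := Finset.single_le_sum (fun i _ => hnonneg u i) (Finset.mem_univ c)
  -- expansion of gradient divergence
  have hexp : ∀ (g : V → ℝ) (u : V),
      ∑ v, wt u v * (g u - g v) = (∑ z, wt u z) * g u - ∑ v, wt u v * g v := by
    intro g u
    simp_rw [mul_sub]
    rw [Finset.sum_sub_distrib, ← Finset.sum_mul]
  -- recurrence implies divergence = degree
  have hrec_div : ∀ (g : V → ℝ) (u : V),
      g u = 1 + ∑ v, (wt u v / ∑ z, wt u z) * g v →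
      ∑ v, wt u v * (g u - g v) = ∑ z, wt u z := by
    intro g u hg
    have hne := (hd u).ne'
    have h2 : ∑ v, (wt u v / ∑ z, wt u z) * g v = (∑ v, wt u v * g v) / ∑ z, wt u z := by
      rw [Finset.sum_div]
      exact Finset.sum_congr rfl fun v _ => by rw [div_mul_eq_mul_div]
    rw [h2] at hg
    rw [hexp g u, hg]
    field_simp
    ring
  -- total divergence is zero for any gradient flow
  have hzero : ∀ g : V → ℝ, ∑ u, ∑ v, wt u v * (g u - g v) = 0 := by
    intro g
    apply sum_antisym_zero
    intro u v
    rw [hsymm v u]; ring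
  have h2W : ∑ u, ∑ z, wt u z = 2 * W := by linarith [hW]
  -- divergence at the "missing" vertex
  have hmiss : ∀ (g : V → ℝ) (a : V), (∀ u, u ≠ a → ∑ v, wt u v * (g u - g v) = ∑ z, wt u z) →
      ∑ v, wt a v * (g a - g v) = (∑ z, wt a z) - 2 * W := by
    intro g a hg
    have h0 := hzero g
    rw [← Finset.add_sum_erase Finset.univ _ (Finset.mem_univ a)] at h0
    have hrest : ∑ u ∈ Finset.univ.erase a, ∑ v, wt u v * (g u - g v)
        = ∑ u ∈ Finset.univ.erase a, ∑ z, wt u z :=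
      Finset.sum_congr rfl fun u hu => hg u (Finset.mem_erase.mp hu).1
    rw [hrest, Finset.sum_erase_eq_sub (Finset.mem_univ a), h2W] at h0
    linarith
  have hBs : ∑ v, wt s v * (Hts s - Hts v) = (∑ z, wt s z) - 2 * W :=
    hmiss Hts s fun u hu => hrec_div Hts u (hHtsrec u hu)
  have hAt : ∑ v, wt t v * (Hst t - Hst v) = (∑ z, wt t z) - 2 * W :=
    hmiss Hst t fun u hu => hrec_div Hst u (hHstrec u hu)
  -- the potential
  set f : V → ℝ := fun u => Hst u - Hts u with hf_def
  have hdivf : ∀ u, ∑ v, wt u v * (f u - f v)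
      = if u = s then 2 * W else if u = t then -(2 * W) else 0 := by
    intro u
    have hsplit : ∑ v, wt u v * (f u - f v)
        = (∑ v, wt u v * (Hst u - Hst v)) - ∑ v, wt u v * (Hts u - Hts v) := by
      rw [← Finset.sum_sub_distrib]
      exact Finset.sum_congr rfl fun v _ => by simp only [hf_def]; ring
    rw [hsplit]
    by_cases h1 : u = s
    · rw [h1, if_pos rfl, hrec_div Hst s (hHstrec s hst), hBs]; ring
    · rw [if_neg h1]
      by_cases h2 : u = t
      · rw [h2, if_pos rfl, hAt, hrec_div Hts t (hHtsrec t (Ne.symm hst))]; ring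
      · rw [if_neg h2, hrec_div Hst u (hHstrec u h2), hrec_div Hts u (hHtsrec u h1)]; ring
  -- the unit current flow
  set p : V → V → ℝ := fun u v => wt u v * (f u - f v) * (2 * W)⁻¹ with hp_def
  have hrow_p : ∀ u, ∑ v, p u v = if u = s then 1 else if u = t then (-1:ℝ) else 0 := by
    intro u
    simp only [hp_def]
    rw [← Finset.sum_mul, hdivf u]
    split_ifs with h1 h2
    · rw [mul_inv_cancel₀ hWne]
    · field_simp
    · simp
  have hanti_p : ∀ u v, p v u = -p u v := by
    intro u v
    simp only [hp_def]
    rw [hsymm v u]; ring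
  have hpzero : ∀ u v, wt u v = 0 → p u v = 0 := by
    intro u v h
    simp only [hp_def]
    rw [h]; ring
  have hpflow : IsFlow wt (fun u => if u = s then 1 else 0) {t} p := by
    refine ⟨hanti_p, ?_, ?_⟩
    · intro u v hne
      rcases (hnonneg u v).lt_or_eq with h | h
      · exact h
      · exact absurd (hpzero u v h.symm) hne
    · intro u hu
      have hu' : u ≠ t := by simpa using hu
      rw [hrow_p u]
      by_cases h : u = s
      · simp [h]
      · simp [h, hu']
  -- energy of p
  have hfs : f s = Hst s := by simp only [hf_def]; rw [hHtss]; ring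
  have hft : f t = -Hts t := by simp only [hf_def]; rw [hHstt]; ring
  have hEp : flowEnergy wt p = (2 * W)⁻¹ * (Hst s + Hts t) := by
    have hpt : ∀ u v, p u v ^ 2 / wt u v = (2 * W)⁻¹ * ((f u - f v) * p u v) := by
      intro u v
      rcases (hnonneg u v).lt_or_eq with h | h
      · have hne := h.ne'
        simp only [hp_def]
        field_simp
      · rw [hpzero u v h.symm, ← h]
        simp
    unfold flowEnergy
    simp_rw [hpt, ← Finset.mul_sum]
    rw [cross_sum s t hst f p hanti_p hrow_p, hfs, hft]
    ring
  -- Thomson's principle: p minimizes energy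
  have hlow : ∀ q, IsFlow wt (fun u => if u = s then 1 else 0) {t} q →
      flowEnergy wt p ≤ flowEnergy wt q := by
    rintro q ⟨hq1, hq2, hq3⟩
    have hq0 : ∀ u v, wt u v = 0 → q u v = 0 := by
      intro u v h
      by_contra hne
      exact absurd (hq2 u v hne) (by rw [h]; exact lt_irrefl 0)
    have hq3' : ∀ u, u ≠ t → ∑ v, q u v = if u = s then (1:ℝ) else 0 := by
      intro u hu
      exact hq3 u (by simpa using hu)
    have hrow_q : ∀ u, ∑ v, q u v = if u = s then 1 else if u = t then (-1:ℝ) else 0 := by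
      intro u
      by_cases h : u = t
      · have h0 := sum_antisym_zero q hq1
        rw [← Finset.add_sum_erase Finset.univ _ (Finset.mem_univ t)] at h0
        have hr : ∑ x ∈ Finset.univ.erase t, ∑ v, q x v
            = ∑ x ∈ Finset.univ.erase t, (if x = s then (1:ℝ) else 0) :=
          Finset.sum_congr rfl fun x hx => hq3' x (Finset.mem_erase.mp hx).1
        rw [hr, Finset.sum_ite_eq' (Finset.univ.erase t) s (fun _ => (1:ℝ)),
          if_pos (Finset.mem_erase.mpr ⟨hst, Finset.mem_univ s⟩)] at h0
        rw [h, if_neg (Ne.symm hst), if_pos rfl]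
        linarith
      · rw [hq3' u h]
        by_cases h2 : u = s <;> simp [h2, h]
    have key : ∀ u v, q u v ^ 2 / wt u v
        = p u v ^ 2 / wt u v + (q u v - p u v) ^ 2 / wt u v
          + 2 * (2 * W)⁻¹ * ((f u - f v) * q u v) - 2 * (2 * W)⁻¹ * ((f u - f v) * p u v) := by
      intro u v
      rcases (hnonneg u v).lt_or_eq with h | h
      · have hne := h.ne'
        have hp_eq : p u v = wt u v * (f u - f v) * (2 * W)⁻¹ := rfl
        rw [hp_eq]
        field_simp
        ring
      · rw [hq0 u v h.symm, hpzero u v h.symm]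
        simp
    have hsplit : flowEnergy wt q = flowEnergy wt p
        + (1/2) * ∑ u, ∑ v, (q u v - p u v) ^ 2 / wt u v
        + (2 * W)⁻¹ * (∑ u, ∑ v, (f u - f v) * q u v)
        - (2 * W)⁻¹ * (∑ u, ∑ v, (f u - f v) * p u v) := by
      unfold flowEnergy
      simp_rw [key, Finset.sum_sub_distrib, Finset.sum_add_distrib, ← Finset.mul_sum]
      ring
    rw [hsplit, cross_sum s t hst f q hq1 hrow_q, cross_sum s t hst f p hanti_p hrow_p]
    have hnn : 0 ≤ ∑ u, ∑ v, (q u v - p u v) ^ 2 / wt u v :=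
      Finset.sum_nonneg fun u _ => Finset.sum_nonneg fun v _ =>
        div_nonneg (sq_nonneg _) (hnonneg u v)
    linarith
  -- conclude
  have hmem : flowEnergy wt p ∈
      {x | ∃ q, IsFlow wt (fun u => if u = s then 1 else 0) {t} q ∧ x = flowEnergy wt q} :=
    ⟨p, hpflow, rfl⟩
  have hlb : ∀ x ∈ {x | ∃ q, IsFlow wt (fun u => if u = s then 1 else 0) {t} q ∧
      x = flowEnergy wt q}, flowEnergy wt p ≤ x := by
    rintro x ⟨q, hq, rfl⟩
    exact hlow q hq
  have hER : effResPt wt s t = flowEnergy wt p := by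
    apply le_antisymm
    · exact csInf_le ⟨flowEnergy wt p, hlb⟩ hmem
    · exact le_csInf ⟨_, hmem⟩ hlb
  rw [hER, hEp, ← mul_assoc, mul_inv_cancel₀ hWne, one_mul]

end
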